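/- For every element x of the pure braid group P_n, x belongs to P_{σ(x)}, where σ(x) is the intersection of all subsets S of N = {1,…,n} such that x ∈ P_S. Consequently, σ(x) is the smallest subset S of N with x ∈ P_S. -/

import Mathlib

/-!
Common setup: the pure braid group `P_n` as a presented group, the subgroups
`P_S` and `Q_S`, the characterization of the homomorphisms `φ_S`, the support
`σ(x)`, and monic commutators.
-/

/-- The free-group generator corresponding to the pure braid generator
`p_{a,b}` for `a < b` (indices in `Fin n`, so strand `i+1` of `{1,…,n}`
corresponds to `i : Fin n`). -/
def pf {n : ℕ} (a b : Fin n) (h : a < b) :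
    FreeGroup {q : Fin n × Fin n // q.1 < q.2} :=
  FreeGroup.of ⟨(a, b), h⟩

/-- The defining relations (A), (B), (C) of the pure braid group `P_n`,
each written in the form `lhs⁻¹ * rhs` for an equation `lhs = rhs`. -/
def braidRels (n : ℕ) : Set (FreeGroup {q : Fin n × Fin n // q.1 < q.2}) :=
  -- (A) first equality: p_{a,b} p_{a,c} p_{b,c} = p_{a,c} p_{b,c} p_{a,b}
  {r | ∃ (a b c : Fin n) (hab : a < b) (hbc : b < c),
      r = (pf a b hab * pf a c (hab.trans hbc) * pf b c hbc)⁻¹ *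
          (pf a c (hab.trans hbc) * pf b c hbc * pf a b hab)} ∪
  -- (A) second equality: p_{a,b} p_{a,c} p_{b,c} = p_{b,c} p_{a,b} p_{a,c}
  {r | ∃ (a b c : Fin n) (hab : a < b) (hbc : b < c),
      r = (pf a b hab * pf a c (hab.trans hbc) * pf b c hbc)⁻¹ *
          (pf b c hbc * pf a b hab * pf a c (hab.trans hbc))} ∪
  -- (B) first: p_{a,b} p_{c,d} = p_{c,d} p_{a,b}
  {r | ∃ (a b c d : Fin n) (hab : a < b) (hbc : b < c) (hcd : c < d),
      r = (pf a b hab * pf c d hcd)⁻¹ * (pf c d hcd * pf a b hab)} ∪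
  -- (B) second: p_{a,d} p_{b,c} = p_{b,c} p_{a,d}
  {r | ∃ (a b c d : Fin n) (hab : a < b) (hbc : b < c) (hcd : c < d),
      r = (pf a d (hab.trans (hbc.trans hcd)) * pf b c hbc)⁻¹ *
          (pf b c hbc * pf a d (hab.trans (hbc.trans hcd)))} ∪
  -- (C): p_{a,c} (p_{b,c}⁻¹ p_{b,d} p_{b,c}) = (p_{b,c}⁻¹ p_{b,d} p_{b,c}) p_{a,c}
  {r | ∃ (a b c d : Fin n) (hab : a < b) (hbc : b < c) (hcd : c < d),
      r = (pf a c (hab.trans hbc) * ((pf b c hbc)⁻¹ * pf b d (hbc.trans hcd) * pf b c hbc))⁻¹ *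
          ((pf b c hbc)⁻¹ * pf b d (hbc.trans hcd) * pf b c hbc * pf a c (hab.trans hbc))}

/-- The pure braid group `P_n`, given by the presentation above. -/
abbrev PB (n : ℕ) := PresentedGroup (braidRels n)

/-- The generator `p_{a,b}` of the pure braid group, for `a < b`. -/
def p {n : ℕ} (a b : Fin n) (h : a < b) : PB n := PresentedGroup.of ⟨(a, b), h⟩

/-- `P_S`: the subgroup of `P_n` generated by all `p_{a,b}` with `a ∈ S` and `b ∈ S`. -/
def PS {n : ℕ} (S : Set (Fin n)) : Subgroup (PB n) :=
  Subgroup.closure {x | ∃ (a b : Fin n) (h : a < b), a ∈ S ∧ b ∈ S ∧ x = p a b h}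

/-- `Q_S`: the subgroup of `P_n` generated by all `p_{a,b}` with `a ∈ S` or `b ∈ S`. -/
def QS {n : ℕ} (S : Set (Fin n)) : Subgroup (PB n) :=
  Subgroup.closure {x | ∃ (a b : Fin n) (h : a < b), (a ∈ S ∨ b ∈ S) ∧ x = p a b h}

/-- `IsPhi S φ` says that `φ : P_n → P_n` is the homomorphism `φ_S`, i.e. it sends
`p_{a,b}` to itself if `a ∉ S` and `b ∉ S`, and to `1` otherwise. -/
def IsPhi {n : ℕ} (S : Set (Fin n)) (φ : PB n →* PB n) : Prop :=
  ∀ (a b : Fin n) (h : a < b),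
    (a ∉ S ∧ b ∉ S → φ (p a b h) = p a b h) ∧ ((a ∈ S ∨ b ∈ S) → φ (p a b h) = 1)

/-- The support `σ(x)` of `x ∈ P_n`: the intersection of all `S` with `x ∈ P_S`. -/
def support {n : ℕ} (x : PB n) : Set (Fin n) := ⋂₀ {S | x ∈ PS S}

/-- Monic commutators: the smallest set of elements of `P_n` containing all
`p_{a,b}` and `p_{a,b}⁻¹` and closed under taking nontrivial commutators
`[x,y] = x⁻¹ y⁻¹ x y`. -/
inductive IsMonic {n : ℕ} : PB n → Prop
  | of (a b : Fin n) (h : a < b) : IsMonic (p a b h)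
  | inv (a b : Fin n) (h : a < b) : IsMonic (p a b h)⁻¹
  | comm (x y : PB n) : IsMonic x → IsMonic y → x⁻¹ * y⁻¹ * x * y ≠ 1 →
      IsMonic (x⁻¹ * y⁻¹ * x * y)


/-! ### Auxiliary machinery for the proof -/

open Classical in
/-- The function on generators defining `φ_U`. -/
noncomputable def phiFun {n : ℕ} (U : Set (Fin n)) :
    {q : Fin n × Fin n // q.1 < q.2} → PB n :=
  fun g => if g.1.1 ∈ U ∨ g.1.2 ∈ U then 1 else p g.1.1 g.1.2 g.2

lemma mk_rel_one {n : ℕ} {r : FreeGroup {q : Fin n × Fin n // q.1 < q.2}}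
    (hr : r ∈ braidRels n) : PresentedGroup.mk (braidRels n) r = 1 :=
  (QuotientGroup.eq_one_iff r).mpr (Subgroup.subset_normalClosure hr)

lemma mk_pf {n : ℕ} (a b : Fin n) (h : a < b) :
    PresentedGroup.mk (braidRels n) (pf a b h) = p a b h := rfl

set_option maxHeartbeats 1000000 in
lemma hrels {n : ℕ} (U : Set (Fin n)) :
    ∀ r ∈ braidRels n, FreeGroup.lift (phiFun U) r = 1 := by
  classical
  intro r hr
  rcases hr with ((((h | h) | h) | h) | h)
  · obtain ⟨a, b, c, hab, hbc, rfl⟩ := h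
    have key := mk_rel_one (n := n) (Or.inl (Or.inl (Or.inl (Or.inl
      ⟨a, b, c, hab, hbc, rfl⟩))))
    simp only [map_mul, map_inv, mk_pf] at key
    simp only [map_mul, map_inv, pf, FreeGroup.lift_apply_of, phiFun]
    by_cases h0 : a ∉ U ∧ b ∉ U ∧ c ∉ U
    · obtain ⟨ha, hb, hc⟩ := h0
      simp only [if_neg (by tauto : ¬(a ∈ U ∨ b ∈ U)),
        if_neg (by tauto : ¬(a ∈ U ∨ c ∈ U)), if_neg (by tauto : ¬(b ∈ U ∨ c ∈ U))]
      exact key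
    · by_cases ha : a ∈ U <;> by_cases hb : b ∈ U <;> by_cases hc : c ∈ U <;>
        simp_all <;> group
  · obtain ⟨a, b, c, hab, hbc, rfl⟩ := h
    have key := mk_rel_one (n := n) (Or.inl (Or.inl (Or.inl (Or.inr
      ⟨a, b, c, hab, hbc, rfl⟩))))
    simp only [map_mul, map_inv, mk_pf] at key
    simp only [map_mul, map_inv, pf, FreeGroup.lift_apply_of, phiFun]
    by_cases h0 : a ∉ U ∧ b ∉ U ∧ c ∉ U
    · obtain ⟨ha, hb, hc⟩ := h0
      simp only [if_neg (by tauto : ¬(a ∈ U ∨ b ∈ U)),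
        if_neg (by tauto : ¬(a ∈ U ∨ c ∈ U)), if_neg (by tauto : ¬(b ∈ U ∨ c ∈ U))]
      exact key
    · by_cases ha : a ∈ U <;> by_cases hb : b ∈ U <;> by_cases hc : c ∈ U <;>
        simp_all <;> group
  · obtain ⟨a, b, c, d, hab, hbc, hcd, rfl⟩ := h
    have key := mk_rel_one (n := n) (Or.inl (Or.inl (Or.inr
      ⟨a, b, c, d, hab, hbc, hcd, rfl⟩)))
    simp only [map_mul, map_inv, mk_pf] at key
    simp only [map_mul, map_inv, pf, FreeGroup.lift_apply_of, phiFun]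
    by_cases h0 : a ∉ U ∧ b ∉ U ∧ c ∉ U ∧ d ∉ U
    · obtain ⟨ha, hb, hc, hd⟩ := h0
      simp only [if_neg (by tauto : ¬(a ∈ U ∨ b ∈ U)),
        if_neg (by tauto : ¬(c ∈ U ∨ d ∈ U))]
      exact key
    · by_cases ha : a ∈ U <;> by_cases hb : b ∈ U <;> by_cases hc : c ∈ U <;>
        by_cases hd : d ∈ U <;> simp_all <;> group
  · obtain ⟨a, b, c, d, hab, hbc, hcd, rfl⟩ := h
    have key := mk_rel_one (n := n) (Or.inl (Or.inr
      ⟨a, b, c, d, hab, hbc, hcd, rfl⟩))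
    simp only [map_mul, map_inv, mk_pf] at key
    simp only [map_mul, map_inv, pf, FreeGroup.lift_apply_of, phiFun]
    by_cases h0 : a ∉ U ∧ b ∉ U ∧ c ∉ U ∧ d ∉ U
    · obtain ⟨ha, hb, hc, hd⟩ := h0
      simp only [if_neg (by tauto : ¬(a ∈ U ∨ d ∈ U)),
        if_neg (by tauto : ¬(b ∈ U ∨ c ∈ U))]
      exact key
    · by_cases ha : a ∈ U <;> by_cases hb : b ∈ U <;> by_cases hc : c ∈ U <;>
        by_cases hd : d ∈ U <;> simp_all <;> group
  · obtain ⟨a, b, c, d, hab, hbc, hcd, rfl⟩ := h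
    have key := mk_rel_one (n := n) (Or.inr
      ⟨a, b, c, d, hab, hbc, hcd, rfl⟩)
    simp only [map_mul, map_inv, mk_pf] at key
    simp only [map_mul, map_inv, pf, FreeGroup.lift_apply_of, phiFun]
    by_cases h0 : a ∉ U ∧ b ∉ U ∧ c ∉ U ∧ d ∉ U
    · obtain ⟨ha, hb, hc, hd⟩ := h0
      simp only [if_neg (by tauto : ¬(a ∈ U ∨ c ∈ U)),
        if_neg (by tauto : ¬(b ∈ U ∨ c ∈ U)), if_neg (by tauto : ¬(b ∈ U ∨ d ∈ U))]
      exact key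
    · by_cases ha : a ∈ U <;> by_cases hb : b ∈ U <;> by_cases hc : c ∈ U <;>
        by_cases hd : d ∈ U <;> simp_all <;> group

/-- The homomorphism `φ_U`. -/
noncomputable def phi {n : ℕ} (U : Set (Fin n)) : PB n →* PB n :=
  PresentedGroup.toGroup (hrels U)

lemma phi_p_one {n : ℕ} (U : Set (Fin n)) (a b : Fin n) (h : a < b)
    (hc : a ∈ U ∨ b ∈ U) : phi U (p a b h) = 1 := by
  show PresentedGroup.toGroup (hrels U) (PresentedGroup.of ⟨(a, b), h⟩) = 1
  rw [PresentedGroup.toGroup.of]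
  exact if_pos hc

lemma phi_p_id {n : ℕ} (U : Set (Fin n)) (a b : Fin n) (h : a < b)
    (ha : a ∉ U) (hb : b ∉ U) : phi U (p a b h) = p a b h := by
  show PresentedGroup.toGroup (hrels U) (PresentedGroup.of ⟨(a, b), h⟩) = p a b h
  rw [PresentedGroup.toGroup.of]
  exact if_neg (by tauto)

/-- `φ_{Tᶜ}` fixes `P_T` pointwise. -/
lemma phi_fix {n : ℕ} (T : Set (Fin n)) {x : PB n} (hx : x ∈ PS T) :
    phi Tᶜ x = x := by
  refine Subgroup.closure_induction (k := _) ?_ (by simp) ?_ ?_ hx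
  · rintro y ⟨a, b, h, ha, hb, rfl⟩
    exact phi_p_id Tᶜ a b h (by simp [ha]) (by simp [hb])
  · intro y z _ _ hy hz; rw [map_mul, hy, hz]
  · intro y _ hy; rw [map_inv, hy]

/-- `φ_{Tᶜ}` maps `P_S` into `P_{S ∩ T}`. -/
lemma phi_maps {n : ℕ} (S T : Set (Fin n)) {x : PB n} (hx : x ∈ PS S) :
    phi Tᶜ x ∈ PS (S ∩ T) := by
  refine Subgroup.closure_induction (k := _) ?_ (by rw [map_one]; exact one_mem _) ?_ ?_ hx
  · rintro y ⟨a, b, h, ha, hb, rfl⟩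
    by_cases hc : a ∈ Tᶜ ∨ b ∈ Tᶜ
    · rw [phi_p_one Tᶜ a b h hc]; exact one_mem _
    · push_neg at hc
      simp only [Set.mem_compl_iff, not_not] at hc
      rw [phi_p_id Tᶜ a b h (by simp [hc.1]) (by simp [hc.2])]
      exact Subgroup.subset_closure ⟨a, b, h, ⟨ha, hc.1⟩, ⟨hb, hc.2⟩, rfl⟩
  · intro y z _ _ hy hz; rw [map_mul]; exact mul_mem hy hz
  · intro y _ hy; rw [map_inv]; exact inv_mem hy

lemma mem_PS_inter {n : ℕ} {S T : Set (Fin n)} {x : PB n}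
    (hS : x ∈ PS S) (hT : x ∈ PS T) : x ∈ PS (S ∩ T) := by
  have := phi_maps S T hS
  rwa [phi_fix T hT] at this

lemma mem_PS_univ {n : ℕ} (x : PB n) : x ∈ PS (Set.univ : Set (Fin n)) := by
  refine PresentedGroup.generated_by _ _ ?_ x
  rintro ⟨⟨a, b⟩, h⟩
  exact Subgroup.subset_closure ⟨a, b, h, trivial, trivial, rfl⟩

lemma mem_PS_sInter {n : ℕ} (x : PB n) (F : Set (Set (Fin n)))
    (hne : F.Nonempty) (hall : ∀ S ∈ F, x ∈ PS S) : x ∈ PS (⋂₀ F) := by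
  classical
  have hfin : F.Finite := Set.toFinite F
  revert hne hall
  refine Set.Finite.induction_on F hfin ?_ @?_
  · intro hne _; exact absurd hne (by simp)
  · intro a s ha hs ih _ hall
    rcases s.eq_empty_or_nonempty with rfl | hsne
    · simpa using hall a (by simp)
    · rw [Set.sInter_insert]
      exact mem_PS_inter (hall a (by simp))
        (ih hsne (fun S hS => hall S (Set.mem_insert_of_mem _ hS)))

/-- every `x ∈ P_n` belongs to `P_{σ(x)}`; consequently `σ(x)` is
the smallest subset `S` of `N` with `x ∈ P_S`. -/
theorem mem_PS_support (n : ℕ) (hn : 0 < n) (x : PB n) :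
    x ∈ PS (support x) ∧ ∀ S : Set (Fin n), x ∈ PS S → support x ⊆ S := by
  constructor
  · exact mem_PS_sInter x {S | x ∈ PS S} ⟨Set.univ, mem_PS_univ x⟩ (fun S hS => hS)
  · intro S hS
    exact Set.sInter_subset_of_mem hS
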